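/- Let π be a permutation of length n ≥ 1 and let k ≥ 0. Then s^k(π[:n]) occurs as a (not necessarily contiguous) subsequence of s^k(π), where π[:n] denotes the sequence of the first n−1 entries of π. -/

import Mathlib

noncomputable section
theorem foldrMaxMem (x : ℕ) (xs : List ℕ) : (x :: xs).foldr max 0 ∈ x :: xs := by
  induction xs generalizing x with
  | nil => simp
  | cons y ys ih =>
    rcases max_choice x ((y :: ys).foldr max 0) with h | h
    · simp only [List.foldr_cons] at h ⊢
      rw [h]; exact List.mem_cons_self
    · simp only [List.foldr_cons] at h ⊢
      rw [h]; exact List.mem_cons_of_mem _ (ih y)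
theorem takeWhileLt (l : List ℕ) (m : ℕ) (hm : m ∈ l) :
    (l.takeWhile (fun y => y ≠ m)).length < l.length := by
  have hd : l.dropWhile (fun y => y ≠ m) ≠ [] := by
    intro h; rw [List.dropWhile_eq_nil_iff] at h; simpa using h m hm
  have h1 : (l.takeWhile (fun y => y ≠ m)).length
      + (l.dropWhile (fun y => y ≠ m)).length = l.length := by
    rw [← List.length_append, List.takeWhile_append_dropWhile]
  have h2 : 0 < (l.dropWhile (fun y => y ≠ m)).length := List.length_pos_iff.mpr hd
  omega
theorem dropWhileDropLt (l : List ℕ) (m : ℕ) (hl : l ≠ []) :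
    ((l.dropWhile (fun y => y ≠ m)).drop 1).length < l.length := by
  have h1 : (l.takeWhile (fun y => y ≠ m)).length
      + (l.dropWhile (fun y => y ≠ m)).length = l.length := by
    rw [← List.length_append, List.takeWhile_append_dropWhile]
  have h2 : 0 < l.length := List.length_pos_iff.mpr hl
  rw [List.length_drop]; omega

/-- West's stack-sorting map `s`: `s([]) = []`, `s(L m R) = s(L) s(R) m` for `m` the maximum. -/
def ss : List ℕ → List ℕ
  | [] => []
  | x :: xs =>
    ss ((x :: xs).takeWhile (fun y => y ≠ (x :: xs).foldr max 0)) ++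
    ss (((x :: xs).dropWhile (fun y => y ≠ (x :: xs).foldr max 0)).drop 1) ++
    [(x :: xs).foldr max 0]
termination_by l => l.length
decreasing_by
  · exact takeWhileLt _ _ (foldrMaxMem _ _)
  · exact dropWhileDropLt _ _ (by simp)

/-- `met π` : the least `k ≥ 0` with `s^k(π)` increasing. -/
def met (l : List ℕ) : ℕ := sInf {k | List.Pairwise (· < ·) (ss^[k] l)}

/-- Right-to-left maxima of a list, read from left to right.  For the prefix of `s^{i-1}(π)`
before `0` this is exactly the column sequence `C_{π,i}`. -/
def rtlMax : List ℕ → List ℕ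
  | [] => []
  | x :: xs => if ∀ y ∈ xs, y < x then x :: rtlMax xs else rtlMax xs

/-- The blocks `b_{π,i,j}`: the segments strictly between consecutive right-to-left maxima. -/
def blocksOf : List ℕ → List (List ℕ)
  | [] => []
  | x :: xs =>
    if ∀ y ∈ xs, y < x then [] :: blocksOf xs
    else
      match blocksOf xs with
      | [] => [[x]]
      | b :: bs => (x :: b) :: bs

/-- The part of `s^{i-1}(π)` strictly before the entry `0`. -/
def prefixAt (π : List ℕ) (i : ℕ) : List ℕ := (ss^[i-1] π).takeWhile (fun x => x ≠ 0)

/-- The column sequence `C_{π,i}`. -/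
def colSeqAt (π : List ℕ) (i : ℕ) : List ℕ := rtlMax (prefixAt π i)

/-- The block sequence `B_{π,i}`. -/
def blocksAt (π : List ℕ) (i : ℕ) : List (List ℕ) := blocksOf (prefixAt π i)

/-- `col_π(v)`: the unique `i` with `v ∈ C_{π,i}` (as the least such `i ≥ 1`). -/
def colOf (π : List ℕ) (v : ℕ) : ℕ := sInf {i | 1 ≤ i ∧ v ∈ colSeqAt π i}

/-- `colpos_π(v)`: the (1-indexed) position of `v` in `C_{π,col_π(v)}`. -/
def colposOf (π : List ℕ) (v : ℕ) : ℕ := (colSeqAt π (colOf π v)).idxOf v + 1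

/-- `leftof_π(v) = c_{π,col_π(v)-1,j}` for the unique `j` with `v = max(b_{π,col_π(v)-1,j})`. -/
def leftOf (π : List ℕ) (v : ℕ) : ℕ :=
  (colSeqAt π (colOf π v - 1)).getD
    (((blocksAt π (colOf π v - 1)).map (fun b => b.foldr max 0)).idxOf v) 0

/-- `row_π(v)`: follow `leftof` back to column 1 and take `colpos` there. -/
def rowOf (π : List ℕ) (v : ℕ) : ℕ := colposOf π ((leftOf π)^[colOf π v - 1] v)

/-- `upof_π(v) = c_{π,col_π(v),colpos_π(v)-1}`. -/
def upOf (π : List ℕ) (v : ℕ) : ℕ := (colSeqAt π (colOf π v)).getD (colposOf π v - 2) 0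

/-- The stack-sorting tableau `T_π(v) = (col_π(v), row_π(v))`. -/
def Tmap (π : List ℕ) (v : ℕ) : ℕ × ℕ := (colOf π v, rowOf π v)

/-- The composition `α_π = (|{v ∈ [n] : row_π(v) = j}|)_{j=1}^{|C_{π,1}|}` (here `n = |π| - 1`). -/
def alphaOf (π : List ℕ) : List ℕ :=
  (List.range' 1 (colSeqAt π 1).length).map
    (fun j => ((Finset.Icc 1 (π.length - 1)).filter (fun v => rowOf π v = j)).card)

/-- Membership in the composition diagram `D(α) = {(i,j) : 1 ≤ j ≤ ℓ(α), 1 ≤ i ≤ α_j}`. -/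
def inDiagram (α : List ℕ) (p : ℕ × ℕ) : Prop :=
  1 ≤ p.1 ∧ 1 ≤ p.2 ∧ p.2 ≤ α.length ∧ p.1 ≤ α.getD (p.2 - 1) 0

instance inDiagramDec (α : List ℕ) : DecidablePred (inDiagram α) := fun p => by
  unfold inDiagram; infer_instance

/-- `D(α)` as a finite set. -/
def diagramFinset (α : List ℕ) : Finset (ℕ × ℕ) :=
  (Finset.range (α.foldr max 0 + 1) ×ˢ Finset.range (α.length + 1)).filter
    (fun p => inDiagram α p)

/-- `colpos_α(i,j) = |{(i,j') ∈ D(α) : j' < j} ∪ {(i,0)}|`. -/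
def colposA (α : List ℕ) (p : ℕ × ℕ) : ℕ :=
  (((Finset.range p.2).filter (fun j' => inDiagram α (p.1, j'))) ∪ {0}).card

/-- `leftof_α(i,j) = (i-1,j)`. -/
def leftA (p : ℕ × ℕ) : ℕ × ℕ := (p.1 - 1, p.2)

/-- `upof_α(i,j) = (i, max({j' < j : (i,j') ∈ D(α)} ∪ {0}))`. -/
def upA (α : List ℕ) (p : ℕ × ℕ) : ℕ × ℕ :=
  (p.1, (((Finset.range p.2).filter (fun j' => inDiagram α (p.1, j'))) ∪ {0}).sup id)

/-- The hook length `h_α(i,j)`. -/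
def hook (α : List ℕ) (p : ℕ × ℕ) : ℕ :=
  if 1 < p.1 then
    ((diagramFinset α).filter (fun q =>
      q.1 ≤ p.1 - 1 ∧ (upA α (p.1 - 1, p.2)).2 < q.2 ∧ q.2 ≤ p.2)).card
  else 1

/-- The segment `B_{π,T}(i,j,k)` of `s^{k-1}(π)`, where `U = T⁻¹`. -/
def Bseg (π : List ℕ) (α : List ℕ) (U : ℕ × ℕ → ℕ) (i j k : ℕ) : List ℕ :=
  if (upA α (leftA (i, j))).2 > 0 then
    ((ss^[k-1] π).take ((ss^[k-1] π).idxOf (U (k, j)) + 1)).drop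
      ((ss^[k-1] π).idxOf (U (k, (upA α (leftA (i, j))).2)) + 1)
  else
    (ss^[k-1] π).take ((ss^[k-1] π).idxOf (U (k, j)) + 1)

/-- The inverse `T_π⁻¹` of the stack-sorting tableau. -/
def invTmap (π : List ℕ) : ℕ × ℕ → ℕ :=
  Function.invFunOn (Tmap π) (Set.Icc 1 (π.length - 1))

/-- A linear extension of `D(α)`, encoded as the list `[T(1), …, T(n)]`:
`T` is a bijection `{1,…,n} → D(α)` with `T(a) ≥_D T(b) → a ≥ b`. -/
def isLinExt (α : List ℕ) (ℓ : List (ℕ × ℕ)) : Prop :=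
  ℓ.Nodup ∧ (∀ p, p ∈ ℓ ↔ inDiagram α p) ∧
  ∀ a b, a < ℓ.length → b < ℓ.length →
    (ℓ.getD a (0, 0)).1 ≤ (ℓ.getD b (0, 0)).1 ∧ (ℓ.getD a (0, 0)).2 ≤ (ℓ.getD b (0, 0)).2 →
    b ≤ a
end

section Aux

theorem ss_nil : ss [] = [] := by rw [ss]

theorem le_foldrMax (l : List ℕ) (y : ℕ) (hy : y ∈ l) : y ≤ l.foldr max 0 := by
  induction l with
  | nil => simp at hy
  | cons a as ih =>
    rcases List.mem_cons.mp hy with h | h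
    · subst h; exact le_max_left _ _
    · exact le_trans (ih h) (le_max_right _ _)

theorem foldrMax_le (l : List ℕ) (m : ℕ) (h : ∀ y ∈ l, y ≤ m) : l.foldr max 0 ≤ m := by
  induction l with
  | nil => simp
  | cons a as ih =>
    simp only [List.foldr_cons]
    exact max_le (h a (by simp)) (ih fun y hy => h y (by simp [hy]))

theorem maxMem (l : List ℕ) (hl : l ≠ []) : l.foldr max 0 ∈ l := by
  cases l with
  | nil => exact absurd rfl hl
  | cons x xs => exact foldrMaxMem x xs

theorem ss_eq (l : List ℕ) (hl : l ≠ []) :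
    ss l = ss (l.takeWhile (fun y => y ≠ l.foldr max 0)) ++
      ss ((l.dropWhile (fun y => y ≠ l.foldr max 0)).drop 1) ++ [l.foldr max 0] := by
  cases l with
  | nil => exact absurd rfl hl
  | cons x xs => rw [ss]

theorem ss_split (L R : List ℕ) (m : ℕ) (hmL : m ∉ L) (hle : ∀ y ∈ L ++ m :: R, y ≤ m) :
    ss (L ++ m :: R) = ss L ++ ss R ++ [m] := by
  have hfold : (L ++ m :: R).foldr max 0 = m :=
    le_antisymm (foldrMax_le _ _ hle) (le_foldrMax _ m (by simp))
  have hpos : ∀ a ∈ L, (fun y => decide (y ≠ m)) a = true := by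
    intro a ha
    simp only [decide_eq_true_eq]
    exact fun h => hmL (h ▸ ha)
  have hT : (L ++ m :: R).takeWhile (fun y => y ≠ (L ++ m :: R).foldr max 0) = L := by
    rw [hfold]
    rw [List.takeWhile_append_of_pos hpos, List.takeWhile_cons_of_neg (by simp),
      List.append_nil]
  have hD : ((L ++ m :: R).dropWhile (fun y => y ≠ (L ++ m :: R).foldr max 0)).drop 1 = R := by
    rw [hfold]
    rw [List.dropWhile_append_of_pos hpos, List.dropWhile_cons_of_neg (by simp)]
    simp
  rw [ss_eq (L ++ m :: R) (by simp), hT, hD, hfold]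

theorem ss_perm : ∀ (N : ℕ) (l : List ℕ), l.length ≤ N → l.Nodup → (ss l).Perm l := by
  intro N
  induction N with
  | zero =>
    intro l hlen _
    have : l = [] := List.length_eq_zero_iff.mp (Nat.le_zero.mp hlen)
    subst this
    rw [ss_nil]
  | succ N ih =>
    intro l hlen hnd
    rcases eq_or_ne l [] with h | h
    · subst h; rw [ss_nil]
    · obtain ⟨L, R, hLR⟩ := List.append_of_mem (maxMem l h)
      have hndLR : (L ++ l.foldr max 0 :: R).Nodup := hLR ▸ hnd
      have hmL : l.foldr max 0 ∉ L := by
        intro hmem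
        exact (List.nodup_append'.mp hndLR).2.2 hmem (by simp)
      have hle : ∀ y ∈ L ++ l.foldr max 0 :: R, y ≤ l.foldr max 0 := by
        intro y hy; exact le_foldrMax l y (hLR ▸ hy)
      have hlenL : L.length ≤ N := by
        have := congrArg List.length hLR
        simp only [List.length_append, List.length_cons] at this
        omega
      have hlenR : R.length ≤ N := by
        have := congrArg List.length hLR
        simp only [List.length_append, List.length_cons] at this
        omega
      have hndL : L.Nodup := ((List.sublist_append_left L _).nodup hndLR)
      have hndR : R.Nodup := (((List.sublist_cons_self _ R).trans
        (List.sublist_append_right L _)).nodup hndLR)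
      rw [hLR, ss_split L R _ hmL hle]
      exact (List.perm_append_singleton _ _).trans
        ((((ih L hlenL hndL).append (ih R hlenR hndR)).cons _).trans List.perm_middle.symm)

theorem key_step : ∀ (N : ℕ) (A B : List ℕ) (x : ℕ), (A ++ x :: B).length ≤ N →
    (A ++ x :: B).Nodup → (∀ b ∈ B, x < b) →
    ∃ C D : List ℕ, ss (A ++ x :: B) = C ++ x :: D ∧ ss (A ++ B) = C ++ D ∧
      ∀ d ∈ D, x < d := by
  intro N
  induction N with
  | zero => intro A B x hlen _ _; simp at hlen
  | succ N ih =>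
    intro A B x hlen hnd hB
    have hxm : x ≤ (A ++ x :: B).foldr max 0 := le_foldrMax _ x (by simp)
    rcases eq_or_ne x ((A ++ x :: B).foldr max 0) with hxeq | hxne
    · -- x is the max; then B must be empty
      have hBnil : B = [] := by
        cases B with
        | nil => rfl
        | cons b bs =>
          have h1 : x < b := hB b (by simp)
          have h2 : b ≤ (A ++ x :: b :: bs).foldr max 0 := le_foldrMax _ b (by simp)
          rw [← hxeq] at h2
          omega
      subst hBnil
      have hxA : x ∉ A := by
        have := List.nodup_append'.mp hnd
        exact fun hmem => this.2.2 hmem (by simp)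
      have hleA : ∀ y ∈ A ++ x :: ([] : List ℕ), y ≤ x := by
        intro y hy
        have := le_foldrMax (A ++ x :: []) y hy
        omega
      refine ⟨ss A, [], ?_, ?_, by simp⟩
      · rw [ss_split A [] x hxA hleA, ss_nil]; simp
      · simp
    · set m := (A ++ x :: B).foldr max 0 with hm
      have hmmem : m ∈ A ++ x :: B := maxMem _ (by simp)
      have hle : ∀ y ∈ A ++ x :: B, y ≤ m := fun y hy => le_foldrMax _ y hy
      have hmAB : m ∈ A ∨ m ∈ B := by
        rcases List.mem_append.mp hmmem with h | h
        · exact Or.inl h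
        · rcases List.mem_cons.mp h with h | h
          · exact absurd h.symm hxne
          · exact Or.inr h
      rcases hmAB with hmA | hmB
      · -- m ∈ A : A = A1 ++ m :: A2
        obtain ⟨A1, A2, hA⟩ := List.append_of_mem hmA
        have hl2 : A ++ x :: B = A1 ++ m :: (A2 ++ x :: B) := by rw [hA]; simp
        have hmem_iff : ∀ y, y ∈ A ++ x :: B ↔
            (y ∈ A1 ∨ y = m ∨ y ∈ A2 ∨ y = x ∨ y ∈ B) := by
          intro y; rw [hl2]; simp [or_assoc]
        have hnd2 : (A1 ++ m :: (A2 ++ x :: B)).Nodup := hl2 ▸ hnd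
        have hmA1 : m ∉ A1 := fun hmem => (List.nodup_append'.mp hnd2).2.2 hmem (by simp)
        have hle2 : ∀ y ∈ A1 ++ m :: (A2 ++ x :: B), y ≤ m := fun y hy => hle y (hl2 ▸ hy)
        have hlen2 : (A2 ++ x :: B).length ≤ N := by
          have h1 := congrArg List.length hl2
          simp only [List.length_append, List.length_cons] at h1 hlen ⊢
          omega
        have hnd3 : (A2 ++ x :: B).Nodup :=
          (((List.sublist_cons_self m _).trans
            (List.sublist_append_right A1 _)).nodup hnd2)
        obtain ⟨C0, D0, h1, h2, h3⟩ := ih A2 B x hlen2 hnd3 hB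
        have hmtail : m ∉ A2 ++ x :: B := by
          have : (m :: (A2 ++ x :: B)).Nodup :=
            ((List.sublist_append_right A1 _).nodup hnd2)
          exact (List.nodup_cons.mp this).1
        have hmA2 : m ∉ A2 ++ B := by
          intro hmem
          apply hmtail
          rcases List.mem_append.mp hmem with h | h
          · exact List.mem_append.mpr (Or.inl h)
          · exact List.mem_append.mpr (Or.inr (List.mem_cons.mpr (Or.inr h)))
        have hle3 : ∀ y ∈ A1 ++ m :: (A2 ++ B), y ≤ m := by
          intro y hy
          simp only [List.mem_append, List.mem_cons] at hy
          rcases hy with h | h | h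
          · exact hle y ((hmem_iff y).mpr (Or.inl h))
          · exact le_of_eq h
          · rcases h with h | h
            · exact hle y ((hmem_iff y).mpr (Or.inr (Or.inr (Or.inl h))))
            · exact hle y ((hmem_iff y).mpr (Or.inr (Or.inr (Or.inr (Or.inr h)))))
        refine ⟨ss A1 ++ C0, D0 ++ [m], ?_, ?_, ?_⟩
        · rw [hl2, ss_split A1 _ m hmA1 hle2, h1]; simp
        · have hAB : A ++ B = A1 ++ m :: (A2 ++ B) := by rw [hA]; simp
          rw [hAB, ss_split A1 _ m hmA1 hle3, h2]
          simp
        · intro d hd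
          rcases List.mem_append.mp hd with h | h
          · exact h3 d h
          · simp only [List.mem_singleton] at h; subst h; omega
      · -- m ∈ B : B = B1 ++ m :: B2
        obtain ⟨B1, B2, hBeq⟩ := List.append_of_mem hmB
        have hl2 : A ++ x :: B = (A ++ x :: B1) ++ m :: B2 := by rw [hBeq]; simp
        have hnd2 : ((A ++ x :: B1) ++ m :: B2).Nodup := hl2 ▸ hnd
        have hmL : m ∉ A ++ x :: B1 := fun hmem =>
          (List.nodup_append'.mp hnd2).2.2 hmem (by simp)
        have hle2 : ∀ y ∈ (A ++ x :: B1) ++ m :: B2, y ≤ m := fun y hy => hle y (hl2 ▸ hy)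
        have hlen2 : (A ++ x :: B1).length ≤ N := by
          have h1 := congrArg List.length hl2
          simp only [List.length_append, List.length_cons] at h1 hlen ⊢
          omega
        have hlenB2 : B2.length ≤ N := by
          have h1 := congrArg List.length hl2
          simp only [List.length_append, List.length_cons] at h1 hlen ⊢
          omega
        have hnd3 : (A ++ x :: B1).Nodup := ((List.sublist_append_left _ _).nodup hnd2)
        have hB1 : ∀ b ∈ B1, x < b := fun b hb => hB b (by simp [hBeq, hb])
        obtain ⟨C0, D0, h1, h2, h3⟩ := ih A B1 x hlen2 hnd3 hB1
        have hndB2 : B2.Nodup := (((List.sublist_cons_self m _).trans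
          (List.sublist_append_right _ _)).nodup hnd2)
        have hpermB2 := ss_perm N B2 hlenB2 hndB2
        have hmAB1 : m ∉ A ++ B1 := by
          intro hmem
          apply hmL
          rcases List.mem_append.mp hmem with h | h
          · exact List.mem_append.mpr (Or.inl h)
          · exact List.mem_append.mpr (Or.inr (List.mem_cons.mpr (Or.inr h)))
        have hle3 : ∀ y ∈ (A ++ B1) ++ m :: B2, y ≤ m := by
          intro y hy
          simp only [List.mem_append, List.mem_cons] at hy
          rcases hy with (h | h) | h | h
          · exact hle2 y (by simp [h])
          · exact hle2 y (by simp [h])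
          · exact le_of_eq h
          · exact hle2 y (by simp [h])
        refine ⟨C0, D0 ++ ss B2 ++ [m], ?_, ?_, ?_⟩
        · rw [hl2, ss_split _ B2 m hmL hle2, h1]; simp
        · have hAB : A ++ B = (A ++ B1) ++ m :: B2 := by rw [hBeq]; simp
          rw [hAB, ss_split _ B2 m hmAB1 hle3, h2]
          simp
        · intro d hd
          simp only [List.mem_append, List.mem_singleton] at hd
          rcases hd with (h | h) | h
          · exact h3 d h
          · have : d ∈ B2 := hpermB2.subset h
            exact hB d (by simp [hBeq, this])
          · subst h
            omega

theorem key_iter (k : ℕ) : ∀ (A B : List ℕ) (x : ℕ), (A ++ x :: B).Nodup →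
    (∀ b ∈ B, x < b) →
    ∃ C D : List ℕ, ss^[k] (A ++ x :: B) = C ++ x :: D ∧ ss^[k] (A ++ B) = C ++ D ∧
      (∀ d ∈ D, x < d) ∧ (C ++ x :: D).Nodup := by
  induction k with
  | zero => intro A B x hnd hB; exact ⟨A, B, rfl, rfl, hB, hnd⟩
  | succ k ih =>
    intro A B x hnd hB
    obtain ⟨C, D, h1, h2, h3, h4⟩ := ih A B x hnd hB
    obtain ⟨C', D', g1, g2, g3⟩ := key_step (C ++ x :: D).length C D x le_rfl h4 h3
    refine ⟨C', D', ?_, ?_, g3, ?_⟩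
    · rw [Function.iterate_succ_apply', h1, g1]
    · rw [Function.iterate_succ_apply', h2, g2]
    · rw [← g1]
      exact ((ss_perm (C ++ x :: D).length _ le_rfl h4).symm).nodup h4

end Aux

/-- Lemma 5.2: `s^k(π[:n])` occurs as a subsequence of `s^k(π)`. -/
theorem stmt_3 (n : ℕ) (hn : 1 ≤ n) (π : List ℕ) (hlen : π.length = n) (hnd : π.Nodup)
    (k : ℕ) :
    (ss^[k] π.dropLast).Sublist (ss^[k] π) := by
  have hne : π ≠ [] := by
    intro h; rw [h] at hlen; simp at hlen; omega
  obtain ⟨g, hg⟩ : ∃ g, π = π.dropLast ++ [g] :=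
    ⟨π.getLast hne, (List.dropLast_append_getLast hne).symm⟩
  obtain ⟨C, D, h1, h2, _, _⟩ := key_iter k π.dropLast [] g
    (by rw [← hg]; exact hnd) (by simp)
  have h2' : ss^[k] π.dropLast = C ++ D := by simpa using h2
  have h1' : ss^[k] π = C ++ g :: D := by rw [hg]; exact h1
  rw [h1', h2']
  exact (List.sublist_cons_self _ _).append_left C
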